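/- Let C* > 0 and δ ∈ (0, 1/2). Let U ∈ L²(0,1) satisfy ‖U‖_{L²(0,1)} ≤ C*, U(x) ≥ δ x for a.e. x ∈ (0, δ), and U(x) ≥ δ (1 − x) for a.e. x ∈ (1 − δ, 1). Let E = (δ/4, 3δ/4) ∪ (1 − 3δ/4, 1 − δ/4), and let h₀ : [0,1] → ℝ be measurable with h₀(x) = 4C*/δ³ for x ∈ E and 0 ≤ h₀(x) ≤ 1 for x ∈ [0,1] \ E. Then ∫₀¹ U(x) h₀(x) dx ≥ C* > 0. -/

import Mathlib

open Real Set MeasureTheory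

/-- choice of the adverse initial datum: Let `C* > 0`, `δ ∈ (0,1/2)`,
and let `U ∈ L²(0,1)` with `‖U‖_{L²(0,1)} ≤ C*`, `U(x) ≥ δx` a.e. on `(0,δ)` and
`U(x) ≥ δ(1−x)` a.e. on `(1−δ,1)`. Let `E = (δ/4, 3δ/4) ∪ (1−3δ/4, 1−δ/4)` and let
`h₀` be measurable with `h₀ = 4C*/δ³` on `E` and `0 ≤ h₀ ≤ 1` on `[0,1] \ E`. Then
`∫₀¹ U h₀ ≥ C* > 0`. -/
theorem adverse_initial_datum_pairing
    (Cstar δ : ℝ) (hC : 0 < Cstar) (hδ : δ ∈ Ioo (0:ℝ) (1/2))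
    (U h₀ : ℝ → ℝ)
    (hUmeas : AEStronglyMeasurable U (volume.restrict (Ioo (0:ℝ) 1)))
    (hUsq : IntegrableOn (fun x => U x ^ 2) (Ioo (0:ℝ) 1))
    (hUnorm : ∫ x in Ioo (0:ℝ) 1, U x ^ 2 ≤ Cstar ^ 2)
    (hUlow0 : ∀ᵐ x ∂volume, x ∈ Ioo (0:ℝ) δ → δ * x ≤ U x)
    (hUlow1 : ∀ᵐ x ∂volume, x ∈ Ioo (1 - δ) 1 → δ * (1 - x) ≤ U x)
    (h₀meas : Measurable h₀)
    (hE : ∀ x ∈ Ioo (δ/4) (3*δ/4) ∪ Ioo (1 - 3*δ/4) (1 - δ/4),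
        h₀ x = 4 * Cstar / δ ^ 3)
    (hoff : ∀ x ∈ Icc (0:ℝ) 1 \ (Ioo (δ/4) (3*δ/4) ∪ Ioo (1 - 3*δ/4) (1 - δ/4)),
        0 ≤ h₀ x ∧ h₀ x ≤ 1) :
    Cstar ≤ ∫ x in Ioo (0:ℝ) 1, U x * h₀ x := by
  obtain ⟨hδ0, hδ2⟩ := hδ
  set M : ℝ := 4 * Cstar / δ ^ 3 with hM
  have hδ3 : (0:ℝ) < δ ^ 3 := by positivity
  have hM0 : 0 < M := by positivity
  set I1 : Set ℝ := Ioo (δ/4) (3*δ/4)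
  set I2 : Set ℝ := Ioo (1 - 3*δ/4) (1 - δ/4)
  set E : Set ℝ := I1 ∪ I2 with hEdef
  have hI1m : MeasurableSet I1 := measurableSet_Ioo
  have hI2m : MeasurableSet I2 := measurableSet_Ioo
  have hEm : MeasurableSet E := hI1m.union hI2m
  have hI1sub : I1 ⊆ Ioo 0 δ := by
    intro x hx; exact ⟨by nlinarith [hx.1], by nlinarith [hx.2]⟩
  have hI2sub : I2 ⊆ Ioo (1 - δ) 1 := by
    intro x hx; exact ⟨by nlinarith [hx.1], by nlinarith [hx.2]⟩
  have hEsub : E ⊆ Ioo 0 1 := by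
    intro x hx
    rcases hx with hx | hx
    · exact ⟨(hI1sub hx).1, lt_trans (hI1sub hx).2 (by linarith)⟩
    · exact ⟨lt_trans (by linarith) (hI2sub hx).1, (hI2sub hx).2⟩
  have hdisj : Disjoint I1 I2 := by
    rw [Set.disjoint_left]
    intro x hx1 hx2
    have := hx1.2; have := hx2.1
    nlinarith
  -- integrability of U
  have hUint : IntegrableOn U (Ioo (0:ℝ) 1) := by
    have hg : IntegrableOn (fun x => (U x ^ 2 + 1) / 2) (Ioo (0:ℝ) 1) := by
      exact ((hUsq.add (integrableOn_const (by simp))).div_const 2)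
    refine hg.integrable.mono hUmeas ?_
    filter_upwards with x
    simp only [Real.norm_eq_abs]
    rw [abs_of_nonneg (by positivity : (0:ℝ) ≤ (U x ^ 2 + 1) / 2)]
    nlinarith [abs_nonneg (U x), sq_abs (U x), sq_nonneg (|U x| - 1)]
  have hUabs : IntegrableOn (fun x => |U x|) (Ioo (0:ℝ) 1) := hUint.abs
  -- integrability of U * h₀
  have hUh : IntegrableOn (fun x => U x * h₀ x) (Ioo (0:ℝ) 1) := by
    set K : ℝ := max 1 M with hK
    have hg : IntegrableOn (fun x => K * |U x|) (Ioo (0:ℝ) 1) := hUabs.const_mul K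
    refine hg.integrable.mono (hUmeas.mul (h₀meas.aestronglyMeasurable.restrict)) ?_
    rw [ae_restrict_iff' measurableSet_Ioo]
    filter_upwards with x hx
    simp only [Real.norm_eq_abs, abs_mul, abs_abs]
    have hb : |h₀ x| ≤ K := by
      by_cases hxE : x ∈ E
      · rw [hE x hxE, abs_of_pos hM0]; exact le_max_right _ _
      · obtain ⟨h1, h2⟩ := hoff x ⟨⟨le_of_lt hx.1, le_of_lt hx.2⟩, hxE⟩
        rw [abs_of_nonneg h1]
        exact le_trans h2 (le_max_left _ _)
    calc |U x| * |h₀ x| ≤ |U x| * K := mul_le_mul_of_nonneg_left hb (abs_nonneg _)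
    _ = |K| * |U x| := by
        rw [abs_of_pos (lt_of_lt_of_le one_pos (le_max_left 1 M))]; ring
  -- split the integral
  have hsplit : ∫ x in Ioo (0:ℝ) 1, U x * h₀ x
      = (∫ x in E, U x * h₀ x) + ∫ x in Ioo (0:ℝ) 1 \ E, U x * h₀ x := by
    rw [← setIntegral_union (Set.disjoint_sdiff_right) (measurableSet_Ioo.diff hEm)
      (hUh.mono_set hEsub) (hUh.mono_set Set.diff_subset),
      Set.union_diff_cancel hEsub]
  -- part on E
  have hEeq : ∫ x in E, U x * h₀ x = M * ∫ x in E, U x := by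
    rw [← integral_const_mul]
    refine setIntegral_congr_fun hEm ?_
    intro x hx
    show U x * h₀ x = M * U x
    rw [hE x hx]; ring
  have hUintE : IntegrableOn U E := hUint.mono_set hEsub
  have hEint : ∫ x in E, U x = (∫ x in I1, U x) + ∫ x in I2, U x :=
    setIntegral_union hdisj hI2m (hUintE.mono_set Set.subset_union_left)
      (hUintE.mono_set Set.subset_union_right)
  have hI1low : δ ^ 3 / 4 ≤ ∫ x in I1, U x := by
    have h1 : ∫ x in I1, δ * x = δ ^ 3 / 4 := by
      rw [← integral_Ioc_eq_integral_Ioo,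
        ← intervalIntegral.integral_of_le (by linarith),
        intervalIntegral.integral_const_mul, integral_id]
      ring
    rw [← h1]
    refine setIntegral_mono_on_ae
      (((continuous_const.mul continuous_id).integrableOn_Icc).mono_set Set.Ioo_subset_Icc_self)
      (hUintE.mono_set Set.subset_union_left) hI1m ?_
    filter_upwards [hUlow0] with x hx hxI
    exact hx (hI1sub hxI)
  have hI2low : δ ^ 3 / 4 ≤ ∫ x in I2, U x := by
    have h1 : ∫ x in I2, δ * (1 - x) = δ ^ 3 / 4 := by
      rw [← integral_Ioc_eq_integral_Ioo,
        ← intervalIntegral.integral_of_le (by linarith)]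
      have : ∀ x : ℝ, δ * (1 - x) = δ - δ * x := fun x => by ring
      simp_rw [this]
      rw [intervalIntegral.integral_sub intervalIntegrable_const
        ((by fun_prop : Continuous fun x : ℝ => δ * x).intervalIntegrable _ _),
        intervalIntegral.integral_const, intervalIntegral.integral_const_mul,
        integral_id]
      simp only [smul_eq_mul]
      ring
    rw [← h1]
    refine setIntegral_mono_on_ae
      (((continuous_const.mul (continuous_const.sub continuous_id)).integrableOn_Icc).mono_set Set.Ioo_subset_Icc_self)
      (hUintE.mono_set Set.subset_union_right) hI2m ?_
    filter_upwards [hUlow1] with x hx hxI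
    exact hx (hI2sub hxI)
  have hEbig : 2 * Cstar ≤ ∫ x in E, U x * h₀ x := by
    rw [hEeq, hEint]
    have : δ ^ 3 / 2 ≤ (∫ x in I1, U x) + ∫ x in I2, U x := by linarith
    calc 2 * Cstar = M * (δ ^ 3 / 2) := by rw [hM]; field_simp; ring
    _ ≤ M * ((∫ x in I1, U x) + ∫ x in I2, U x) :=
      mul_le_mul_of_nonneg_left this hM0.le
  -- the complement part
  have habsle : ∫ x in Ioo (0:ℝ) 1, |U x| ≤ Cstar := by
    have hptw : ∀ x, |U x| ≤ U x ^ 2 / (2 * Cstar) + Cstar / 2 := by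
      intro x
      rw [div_add_div _ _ (by positivity : (2:ℝ) * Cstar ≠ 0) (two_ne_zero),
        le_div_iff₀ (by positivity)]
      nlinarith [sq_abs (U x), sq_nonneg (|U x| - Cstar)]
    have hg : IntegrableOn (fun x => U x ^ 2 / (2 * Cstar) + Cstar / 2) (Ioo (0:ℝ) 1) :=
      (hUsq.div_const _).add (integrableOn_const (by simp))
    calc ∫ x in Ioo (0:ℝ) 1, |U x|
        ≤ ∫ x in Ioo (0:ℝ) 1, (U x ^ 2 / (2 * Cstar) + Cstar / 2) :=
          setIntegral_mono_on hUabs hg measurableSet_Ioo (fun x _ => hptw x)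
      _ = (∫ x in Ioo (0:ℝ) 1, U x ^ 2) / (2 * Cstar)
          + (volume (Ioo (0:ℝ) 1)).toReal * (Cstar / 2) := by
          rw [integral_add (hUsq.div_const _) (integrableOn_const (by simp)),
            integral_div, setIntegral_const, smul_eq_mul, measureReal_def]
      _ ≤ Cstar ^ 2 / (2 * Cstar) + 1 * (Cstar / 2) := by
          have hv : (volume (Ioo (0:ℝ) 1)).toReal ≤ 1 := by simp [Real.volume_Ioo]
          gcongr
      _ = Cstar := by field_simp; ring
  have hcompl : -Cstar ≤ ∫ x in Ioo (0:ℝ) 1 \ E, U x * h₀ x := by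
    have h1 : ∫ x in Ioo (0:ℝ) 1 \ E, -|U x| ≤ ∫ x in Ioo (0:ℝ) 1 \ E, U x * h₀ x := by
      refine setIntegral_mono_on ((hUabs.mono_set Set.diff_subset).neg)
        (hUh.mono_set Set.diff_subset) (measurableSet_Ioo.diff hEm) ?_
      intro x hx
      obtain ⟨h0, h1⟩ := hoff x ⟨⟨hx.1.1.le, hx.1.2.le⟩, hx.2⟩
      rcases le_or_gt 0 (U x) with hU | hU
      · calc -|U x| ≤ 0 := by simp [abs_nonneg]
        _ ≤ U x * h₀ x := mul_nonneg hU h0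
      · calc -|U x| = U x := by rw [abs_of_neg hU]; ring
        _ = U x * 1 := by ring
        _ ≤ U x * h₀ x := by nlinarith
    have h2 : -Cstar ≤ ∫ x in Ioo (0:ℝ) 1 \ E, -|U x| := by
      rw [integral_neg, neg_le_neg_iff]
      calc ∫ x in Ioo (0:ℝ) 1 \ E, |U x|
          ≤ ∫ x in Ioo (0:ℝ) 1, |U x| :=
            setIntegral_mono_set hUabs
              (Filter.Eventually.of_forall fun x => abs_nonneg _)
              (HasSubset.Subset.eventuallyLE Set.diff_subset)
        _ ≤ Cstar := habsle
    linarith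
  rw [hsplit]
  linarith
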